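/- arXiv:0803.1540 — 2 statements merged into one kernel-verified Lean document; each statement's English description precedes it below -/
import Mathlib

section
/- Let U be a finite-dimensional real vector space with k alternating bilinear forms ω¹,…,ω^k, and let H, S be subspaces with D = H ⊕ S where S = D^⊥ and D^⊥ ⊆ D. Then H ∩ H^⊥ = {0}, i.e. H is a k-symplectic subspace. -/
/-- The k-symplectic orthogonal of a subspace. -/
def kPerp {U : Type*} [AddCommGroup U] [Module ℝ U] {k : ℕ}
    (ω : Fin k → U →ₗ[ℝ] U →ₗ[ℝ] ℝ) (W : Submodule ℝ U) : Submodule ℝ U where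
  carrier := {u | ∀ w ∈ W, ∀ A, ω A u w = 0}
  zero_mem' := by intro w hw A; simp
  add_mem' := by
    intro a b ha hb w hw A
    simp [ha w hw A, hb w hw A]
  smul_mem' := by
    intro c a ha w hw A
    simp [ha w hw A]

theorem mem_kPerp {U : Type*} [AddCommGroup U] [Module ℝ U] {k : ℕ}
    (ω : Fin k → U →ₗ[ℝ] U →ₗ[ℝ] ℝ) (W : Submodule ℝ U) (u : U) :
    u ∈ kPerp ω W ↔ ∀ w ∈ W, ∀ A, ω A u w = 0 := Iff.rfl

/-- if D is k-coisotropic with S = D^⊥ and D = H ⊕ S, then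
H ∩ H^⊥ = 0, i.e. H is a k-symplectic subspace. -/
theorem complement_is_kSymplectic
    {U : Type*} [AddCommGroup U] [Module ℝ U] [FiniteDimensional ℝ U] {k : ℕ}
    (ω : Fin k → U →ₗ[ℝ] U →ₗ[ℝ] ℝ)
    (halt : ∀ A : Fin k, ∀ u : U, ω A u u = 0)
    (hker : ∀ u : U, (∀ A : Fin k, ∀ v : U, ω A u v = 0) → u = 0)
    (D H : Submodule ℝ U)
    (hcoiso : kPerp ω D ≤ D)
    (hsum : H ⊔ kPerp ω D = D)
    (hdisj : H ⊓ kPerp ω D = ⊥) :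
    H ⊓ kPerp ω H = ⊥ := by
  have hskew : ∀ A : Fin k, ∀ u v : U, ω A u v = - ω A v u := by
    intro A u v
    have h := halt A (u + v)
    simp only [map_add, LinearMap.add_apply, halt A u, halt A v] at h
    linarith
  rw [eq_bot_iff]
  intro u hu
  obtain ⟨huH, huHp⟩ := hu
  have huD : u ∈ D := hsum ▸ Submodule.mem_sup_left huH
  have huDp : u ∈ kPerp ω D := by
    intro w hw A
    rw [← hsum] at hw
    obtain ⟨h, hh, s, hs, rfl⟩ := Submodule.mem_sup.mp hw
    have h1 : ω A u h = 0 := huHp h hh A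
    have h2 : ω A u s = 0 := by
      rw [hskew]
      simp [hs u huD A]
    simp [h1, h2]
  have : u ∈ H ⊓ kPerp ω D := ⟨huH, huDp⟩
  rw [hdisj] at this
  simpa using this
end

section
/- Let U be a finite-dimensional real vector space with k alternating bilinear forms ω¹,…,ω^k, D a k-coisotropic subspace (D^⊥ ⊆ D), T a subspace, and H = T ∩ D. If H ∩ H^⊥ = {0}, then T ∩ D^⊥ = {0}. -/
/-- if D is k-coisotropic, H = T ∩ D and H ∩ H^⊥ = 0, then
T ∩ D^⊥ = 0. -/
theorem compatibility_of_kSymplectic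
    {U : Type*} [AddCommGroup U] [Module ℝ U] [FiniteDimensional ℝ U] {k : ℕ}
    (ω : Fin k → U →ₗ[ℝ] U →ₗ[ℝ] ℝ)
    (halt : ∀ A : Fin k, ∀ u : U, ω A u u = 0)
    (D T : Submodule ℝ U)
    (hcoiso : kPerp ω D ≤ D)
    (hH : (T ⊓ D) ⊓ kPerp ω (T ⊓ D) = ⊥) :
    T ⊓ kPerp ω D = ⊥ := by
  rw [eq_bot_iff] at hH ⊢
  intro u hu
  apply hH
  obtain ⟨huT, huP⟩ := hu
  refine ⟨⟨huT, hcoiso huP⟩, ?_⟩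
  intro w hw A
  exact huP w hw.2 A
end
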